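/- arXiv:1908.10629 — 6 statements merged into one kernel-verified Lean document; each statement's English description precedes it below -/
import Mathlib

section
/- Let k ≥ 1, n = 2^k - 1, and let S ⊆ {0,1}^n be the cocycle space of PG(k-1,2). Then the point (1/2, ..., 1/2) ∈ R^n lies in the interior of conv(S); moreover (1/2)·1 = Σ_{p∈S} (1/(n+1))·p, and this is the unique way to write (1/2)·1 as a convex combination of the points of S. -/
open Matrix

/-- The point of the cocycle space of `PG(k-1,2)` corresponding to `y ∈ GF(2)^k`, viewed as a
real vector whose coordinates are indexed by the nonzero vectors of `GF(2)^k`. -/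
noncomputable def cocyclePoint (k : ℕ) (y : Fin k → ZMod 2) :
    {a : Fin k → ZMod 2 // a ≠ 0} → ℝ :=
  fun a => ((dotProduct y a.val).val : ℝ)

lemma zmod2_em (u : ZMod 2) : u = 0 ∨ u = 1 := by revert u; decide

lemma chi_add (u v : ZMod 2) :
    ((-1:ℝ)) ^ (u + v).val = (-1:ℝ)^u.val * (-1:ℝ)^v.val := by
  rcases zmod2_em u with h|h <;> rcases zmod2_em v with h'|h' <;> subst h <;> subst h' <;>
    norm_num [ZMod.val_one, show ZMod.val (2:ZMod 2) = 0 by decide]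

lemma val_eq_chi (u : ZMod 2) : ((u.val : ℝ)) = (1 - (-1:ℝ)^u.val)/2 := by
  rcases zmod2_em u with h|h <;> subst h <;> norm_num [ZMod.val_one]

lemma chi_eq_val (u : ZMod 2) : ((-1:ℝ))^u.val = 1 - 2*(u.val : ℝ) := by
  rcases zmod2_em u with h|h <;> subst h <;> norm_num [ZMod.val_one]

lemma chi_succ (u : ZMod 2) : ((-1:ℝ))^((u+1).val) = -((-1:ℝ)^u.val) := by
  rcases zmod2_em u with h|h <;> subst h <;>
    norm_num [ZMod.val_one, show ZMod.val (2:ZMod 2) = 0 by decide]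

lemma card_fun2 (k : ℕ) : Fintype.card (Fin k → ZMod 2) = 2 ^ k := by
  simp [Fintype.card_fun]

lemma chi_sum_eq_zero {k : ℕ} (w : Fin k → ZMod 2) (hw : w ≠ 0) :
    ∑ a : Fin k → ZMod 2, ((-1:ℝ)) ^ (w ⬝ᵥ a).val = 0 := by
  obtain ⟨i, hi⟩ : ∃ i, w i ≠ 0 := by
    by_contra h; push_neg at h; exact hw (funext h)
  have hwi : w i = 1 := (zmod2_em (w i)).resolve_left hi
  have key : ∀ a : Fin k → ZMod 2, w ⬝ᵥ (a + Pi.single i 1) = w ⬝ᵥ a + 1 := by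
    intro a
    rw [dotProduct_add]
    congr 1
    simp [dotProduct, Pi.single_apply, hwi]
  have h2 : ∑ a : Fin k → ZMod 2, ((-1:ℝ)) ^ (w ⬝ᵥ a).val
      = ∑ a : Fin k → ZMod 2, ((-1:ℝ)) ^ (w ⬝ᵥ (a + Pi.single i 1)).val :=
    (Fintype.sum_equiv (Equiv.addRight (Pi.single i 1)) _ _ (fun a => rfl)).symm
  have h3 : ∑ a : Fin k → ZMod 2, ((-1:ℝ)) ^ (w ⬝ᵥ (a + Pi.single i 1)).val
      = -∑ a : Fin k → ZMod 2, ((-1:ℝ)) ^ (w ⬝ᵥ a).val := by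
    rw [← Finset.sum_neg_distrib]
    exact Finset.sum_congr rfl fun a _ => by rw [key a, chi_succ]
  linarith [h2.trans h3]

lemma fourier2 {k : ℕ} (w : (Fin k → ZMod 2) → ℝ) (c : ℝ)
    (h : ∀ a : Fin k → ZMod 2, a ≠ 0 → ∑ y, w y * (-1:ℝ)^((y ⬝ᵥ a).val) = 0)
    (h0 : ∑ y, w y = c) :
    ∀ y, w y = c / 2^k := by
  intro y₀
  have big : ∑ a : Fin k → ZMod 2,
      (∑ y, w y * (-1:ℝ)^((y ⬝ᵥ a).val)) * (-1:ℝ)^((y₀ ⬝ᵥ a).val) = c := by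
    rw [Fintype.sum_eq_single (0 : Fin k → ZMod 2)
      (fun a ha => by rw [h a ha, zero_mul])]
    simp [dotProduct_zero, h0]
  have swap : ∑ a : Fin k → ZMod 2,
      (∑ y, w y * (-1:ℝ)^((y ⬝ᵥ a).val)) * (-1:ℝ)^((y₀ ⬝ᵥ a).val)
      = ∑ y, w y * ∑ a : Fin k → ZMod 2, (-1:ℝ)^(((y + y₀) ⬝ᵥ a).val) := by
    simp_rw [Finset.sum_mul, Finset.mul_sum]
    rw [Finset.sum_comm]
    refine Finset.sum_congr rfl fun y _ => Finset.sum_congr rfl fun a _ => ?_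
    rw [add_dotProduct, chi_add]; ring
  have inner : ∀ y : Fin k → ZMod 2,
      (∑ a : Fin k → ZMod 2, (-1:ℝ)^(((y + y₀) ⬝ᵥ a).val)) = if y = y₀ then (2:ℝ)^k else 0 := by
    intro y
    by_cases hy : y = y₀
    · subst hy
      have : y + y = 0 := by
        funext j; rcases zmod2_em (y j) with h'|h' <;> simp [h'] <;> decide
      simp [this, zero_dotProduct, card_fun2]
    · have hne : y + y₀ ≠ 0 := by
        intro hc
        apply hy
        funext j
        have := congrFun hc j
        rcases zmod2_em (y j) with h'|h' <;> rcases zmod2_em (y₀ j) with h''|h'' <;>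
          simp [h', h''] at this ⊢
      rw [if_neg hy]
      exact chi_sum_eq_zero _ hne
  rw [swap] at big
  rw [Finset.sum_congr rfl (fun y _ => by rw [inner y])] at big
  simp [Finset.sum_ite_eq'] at big
  field_simp
  linarith [big]

/-- If the weighted sums of the coordinates all equal `d` and the total weight is `2*d`,
then all weights are equal. -/
lemma weights_eq {k : ℕ} (w : (Fin k → ZMod 2) → ℝ) (c d : ℝ)
    (h0 : ∑ y, w y = c)
    (h : ∀ a : {a : Fin k → ZMod 2 // a ≠ 0},
      ∑ y, w y * ((y ⬝ᵥ a.val).val : ℝ) = d)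
    (hcd : c = 2 * d) :
    ∀ y, w y = c / 2^k := by
  apply fourier2 w c _ h0
  intro a ha
  have hd := h ⟨a, ha⟩
  simp only [chi_eq_val]
  have : ∑ y, w y * (1 - 2*(((y ⬝ᵥ a).val : ℕ) : ℝ))
      = (∑ y, w y) - 2 * ∑ y, w y * (((y ⬝ᵥ a).val : ℕ) : ℝ) := by
    rw [Finset.mul_sum, ← Finset.sum_sub_distrib]
    exact Finset.sum_congr rfl fun y _ => by ring
  rw [this, h0, hd, hcd]; ring

/-- For `k ≥ 1`, `n = 2^k - 1` and `S` the cocycle space of `PG(k-1,2)` in `ℝ^n`: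
the point `(1/2)·𝟏` lies in the interior of `conv(S)`; moreover
`(1/2)·𝟏 = Σ_{p ∈ S} (1/(n+1))·p`, and this is the unique way of writing `(1/2)·𝟏` as a
convex combination of the points of `S`. (The `2^k = n + 1` points of `S` are indexed by
`y ∈ GF(2)^k`.) -/
theorem PG_cocycle_space_center (k : ℕ) (hk : 1 ≤ k) :
    (fun _ : {a : Fin k → ZMod 2 // a ≠ 0} => (1 / 2 : ℝ)) ∈
        interior (convexHull ℝ (Set.range (cocyclePoint k))) ∧
    (∑ y : Fin k → ZMod 2, (1 / (2 ^ k : ℝ)) • cocyclePoint k y) =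
        (fun _ => (1 / 2 : ℝ)) ∧
    (∀ α : (Fin k → ZMod 2) → ℝ, (∀ y, 0 ≤ α y) → (∑ y, α y) = 1 →
      (∑ y, α y • cocyclePoint k y) = (fun _ => (1 / 2 : ℝ)) →
      ∀ y, α y = 1 / (2 ^ k : ℝ)) := by
  have hpk : (0:ℝ) < 2^k := by positivity
  -- Part 2
  have part2 : (∑ y : Fin k → ZMod 2, (1 / (2 ^ k : ℝ)) • cocyclePoint k y) =
      (fun _ => (1 / 2 : ℝ)) := by
    funext a
    rw [Finset.sum_apply]
    have h0 : ∑ y : Fin k → ZMod 2, (-1:ℝ)^((y ⬝ᵥ a.val).val) = 0 := by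
      rw [← chi_sum_eq_zero a.val a.prop]
      exact Finset.sum_congr rfl fun y _ => by rw [dotProduct_comm]
    have hs : ∑ y : Fin k → ZMod 2, (((y ⬝ᵥ a.val).val : ℕ) : ℝ) = 2^k / 2 := by
      have : ∀ y : Fin k → ZMod 2, (((y ⬝ᵥ a.val).val : ℕ) : ℝ)
          = 1/2 - (1/2) * (-1:ℝ)^((y ⬝ᵥ a.val).val) := fun y => by
        rw [val_eq_chi]; ring
      rw [Finset.sum_congr rfl fun y _ => this y, Finset.sum_sub_distrib, ← Finset.mul_sum, h0,
        Finset.sum_const, Finset.card_univ, card_fun2]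
      simp; ring
    have : ∀ y : Fin k → ZMod 2,
        ((1 / (2 ^ k : ℝ)) • cocyclePoint k y) a = (1/(2^k:ℝ)) * (((y ⬝ᵥ a.val).val : ℕ) : ℝ) :=
      fun y => rfl
    rw [Finset.sum_congr rfl fun y _ => this y, ← Finset.mul_sum, hs]
    field_simp
  -- affine independence
  have hai : AffineIndependent ℝ (cocyclePoint k) := by
    rw [affineIndependent_iff]
    intro s w hw hsum e he
    set w' : (Fin k → ZMod 2) → ℝ := fun y => if y ∈ s then w y else 0 with hw'
    have hsum' : ∑ y, w' y = 0 := by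
      rw [Finset.sum_ite_mem, Finset.univ_inter, hw]
    have hvec : (∑ y, w' y • cocyclePoint k y) = 0 := by
      have : ∀ y : Fin k → ZMod 2, w' y • cocyclePoint k y
          = if y ∈ s then w y • cocyclePoint k y else 0 := by
        intro y; by_cases hy : y ∈ s <;> simp [hw', hy]
      rw [Finset.sum_congr rfl fun y _ => this y, Finset.sum_ite_mem, Finset.univ_inter, hsum]
    have key : ∀ y, w' y = 0 / 2^k := by
      apply weights_eq w' 0 0 hsum' _ (by ring)
      intro a
      have := congrFun hvec a
      rw [Finset.sum_apply] at this
      simpa [cocyclePoint] using this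
    have := key e
    rw [hw'] at this
    simpa [he, zero_div] using this
  -- spanning
  have hcard : Fintype.card {a : Fin k → ZMod 2 // a ≠ 0} = 2^k - 1 := by
    have h1 : Fintype.card {a : Fin k → ZMod 2 // ¬ (a = 0)}
        = Fintype.card (Fin k → ZMod 2) - Fintype.card {a : Fin k → ZMod 2 // a = 0} :=
      Fintype.card_subtype_compl _
    rw [h1, card_fun2, Fintype.card_subtype_eq (0 : Fin k → ZMod 2)]
  have hspan : affineSpan ℝ (Set.range (cocyclePoint k)) = ⊤ := by
    rw [hai.affineSpan_eq_top_iff_card_eq_finrank_add_one, card_fun2,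
      Module.finrank_fintype_fun_eq_card, hcard]
    have : 1 ≤ 2^k := Nat.one_le_two_pow
    omega
  -- the affine basis
  let b : AffineBasis (Fin k → ZMod 2) ℝ ({a : Fin k → ZMod 2 // a ≠ 0} → ℝ) :=
    ⟨cocyclePoint k, hai, hspan⟩
  have hb : ⇑b = cocyclePoint k := rfl
  have hw1 : ∑ y : Fin k → ZMod 2, (fun _ : Fin k → ZMod 2 => 1/(2^k:ℝ)) y = 1 := by
    rw [Finset.sum_const, Finset.card_univ, card_fun2]
    simp
  have hcomb : (fun _ : {a : Fin k → ZMod 2 // a ≠ 0} => (1 / 2 : ℝ))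
      = Finset.univ.affineCombination ℝ (cocyclePoint k) (fun _ => 1/(2^k:ℝ)) := by
    rw [Finset.univ.affineCombination_eq_linear_combination _ _ hw1]
    exact part2.symm
  refine ⟨?_, part2, ?_⟩
  · rw [← hb, b.interior_convexHull]
    intro i
    rw [hcomb]
    have : Finset.univ.affineCombination ℝ (cocyclePoint k) (fun _ => 1/(2^k:ℝ))
        = Finset.univ.affineCombination ℝ ⇑b (fun _ => 1/(2^k:ℝ)) := by rw [hb]
    rw [this, b.coord_apply_combination_of_mem (Finset.mem_univ i) hw1]
    positivity
  · intro α hpos hsum1 heq y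
    have key := weights_eq α 1 (1/2) hsum1 ?_ (by ring)
    · rw [key y]
    · intro a
      have := congrFun heq a
      rw [Finset.sum_apply] at this
      simpa [cocyclePoint] using this
end

section
/- Let k ≥ 1, n = 2^k - 1, and let S be the cocycle space of PG(k-1,2) viewed in R^n. For each p ∈ S, the inequality Σ_{i : p_i = 0} x_i + Σ_{j : p_j = 1} (1 - x_j) ≤ (n+1)/2 is valid for all points of S, and every point of S other than p satisfies it with equality. -/
open Matrix Finset

lemma zmod2_not_one (x : ZMod 2) : (¬ x = 1) ↔ x = 0 := by revert x; decide
lemma zmod2_ne_zero : ∀ x : ZMod 2, x ≠ 0 → x = 1 := by decide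

-- fiber count in full space
lemma card_fiber {k : ℕ} (w : Fin k → ZMod 2) (hw : w ≠ 0) :
    (Finset.univ.filter (fun a : Fin k → ZMod 2 => dotProduct w a = 1)).card
      = 2 ^ (k - 1) := by
  obtain ⟨i, hi⟩ : ∃ i, w i ≠ 0 := by
    by_contra h; push_neg at h; exact hw (funext fun i => h i)
  have hwi : w i = 1 := zmod2_ne_zero _ hi
  set e : Fin k → ZMod 2 := Pi.single i 1 with he_def
  have he : dotProduct w e = 1 := by
    simp [dotProduct, he_def, Pi.single_apply, mul_ite, Finset.sum_ite_eq', hwi]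
  have hbij : (univ.filter (fun a : Fin k → ZMod 2 => dotProduct w a = 0)).card
      = (univ.filter (fun a : Fin k → ZMod 2 => dotProduct w a = 1)).card := by
    apply Finset.card_nbij' (fun a => a + e) (fun a => a + e)
    · intro a ha
      simp only [mem_coe, mem_filter, mem_univ, true_and] at ha ⊢
      rw [dotProduct_add, ha, he]; ring
    · intro a ha
      simp only [mem_coe, mem_filter, mem_univ, true_and] at ha ⊢
      rw [dotProduct_add, ha, he]; decide
    · intro a _; funext j
      simp only [Pi.add_apply]
      rw [add_assoc, CharTwo.add_self_eq_zero, add_zero]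
    · intro a _; funext j
      simp only [Pi.add_apply]
      rw [add_assoc, CharTwo.add_self_eq_zero, add_zero]
  have htot := Finset.card_filter_add_card_filter_not
    (s := (univ : Finset (Fin k → ZMod 2)))
    (p := fun a => dotProduct w a = 1)
  have hcompl : (univ.filter (fun a : Fin k → ZMod 2 => ¬ dotProduct w a = 1))
      = univ.filter (fun a : Fin k → ZMod 2 => dotProduct w a = 0) := by
    apply Finset.filter_congr
    intro a _
    simp [zmod2_not_one]
  rw [hcompl, ← hbij, Finset.card_univ] at htot
  have hcard : Fintype.card (Fin k → ZMod 2) = 2 ^ k := by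
    simp [Fintype.card_fun]
  have hk : 1 ≤ k := i.pos
  rw [hcard] at htot
  have h2 : 2 ^ k = 2 * 2 ^ (k - 1) := by
    conv_lhs => rw [← Nat.sub_add_cancel hk]
    rw [pow_succ]; ring
  omega

lemma card_fiber_sub {k : ℕ} (w : Fin k → ZMod 2) :
    (Finset.univ.filter
      (fun a : {a : Fin k → ZMod 2 // a ≠ 0} => dotProduct w a.val = 1)).card
    = (Finset.univ.filter (fun a : Fin k → ZMod 2 => dotProduct w a = 1)).card := by
  apply Finset.card_bij (fun a _ => a.val)
  · intro a ha
    simp only [mem_filter, mem_univ, true_and] at ha ⊢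
    exact ha
  · intro a _ b _ h
    exact Subtype.ext h
  · intro b hb
    simp only [mem_filter, mem_univ, true_and] at hb
    have hb0 : b ≠ 0 := by
      rintro rfl
      rw [dotProduct_zero] at hb
      exact one_ne_zero hb.symm
    exact ⟨⟨b, hb0⟩, by simp [hb], rfl⟩

/-- Let `k ≥ 1`, `n = 2^k - 1`, and let `S` be the cocycle space of `PG(k-1,2)`
viewed in `ℝ^n` (points indexed by `z ∈ GF(2)^k`, coordinates indexed by the nonzero vectors
`a ∈ GF(2)^k`, the coordinate at `a` of the point of `z` being `zᵀa`). For each point `p`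
of `S` (corresponding to `z`), the inequality
`Σ_{a : p_a = 0} x_a + Σ_{a : p_a = 1} (1 - x_a) ≤ (n+1)/2`
holds for every point `x` of `S` (corresponding to `y`), with equality whenever `x ≠ p`. -/
theorem PG_cocycle_facets (k : ℕ) (hk : 1 ≤ k) (z y : Fin k → ZMod 2) :
    ((∑ a ∈ Finset.univ.filter
        (fun a : {a : Fin k → ZMod 2 // a ≠ 0} => dotProduct z a.val = 0),
        ((dotProduct y a.val).val : ℝ)) +
      ∑ a ∈ Finset.univ.filter
        (fun a : {a : Fin k → ZMod 2 // a ≠ 0} => dotProduct z a.val = 1),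
        (1 - ((dotProduct y a.val).val : ℝ)) ≤ (2 ^ k : ℝ) / 2) ∧
    (y ≠ z →
      (∑ a ∈ Finset.univ.filter
        (fun a : {a : Fin k → ZMod 2 // a ≠ 0} => dotProduct z a.val = 0),
        ((dotProduct y a.val).val : ℝ)) +
      ∑ a ∈ Finset.univ.filter
        (fun a : {a : Fin k → ZMod 2 // a ≠ 0} => dotProduct z a.val = 1),
        (1 - ((dotProduct y a.val).val : ℝ)) = (2 ^ k : ℝ) / 2) := by
  have h01 : ∀ x : ZMod 2, x = 0 ∨ x = 1 := by decide
  have hval : ∀ x : ZMod 2, ((x.val : ℝ)) = if x = 1 then 1 else 0 := by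
    intro x
    rcases h01 x with rfl | rfl <;> norm_num [show ((0:ZMod 2)).val = 0 from rfl, show ((1:ZMod 2)).val = 1 from rfl]
  have hval0 : ∀ x : ZMod 2, (1 - (x.val : ℝ)) = if x = 0 then 1 else 0 := by
    intro x
    rcases h01 x with rfl | rfl <;> norm_num [show ((0:ZMod 2)).val = 0 from rfl, show ((1:ZMod 2)).val = 1 from rfl]
  have hpred : ∀ u v : ZMod 2, (u + v = 1) ↔ ((u = 0 ∧ v = 1) ∨ (u = 1 ∧ v = 0)) := by
    decide
  have hsum : (∑ a ∈ Finset.univ.filter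
        (fun a : {a : Fin k → ZMod 2 // a ≠ 0} => dotProduct z a.val = 0),
        ((dotProduct y a.val).val : ℝ)) +
      ∑ a ∈ Finset.univ.filter
        (fun a : {a : Fin k → ZMod 2 // a ≠ 0} => dotProduct z a.val = 1),
        (1 - ((dotProduct y a.val).val : ℝ))
      = ((Finset.univ.filter
          (fun a : {a : Fin k → ZMod 2 // a ≠ 0} =>
            dotProduct (z + y) a.val = 1)).card : ℝ) := by
    simp_rw [hval0, hval, Finset.sum_boole, Finset.filter_filter]
    rw [← Nat.cast_add]
    congr 1
    have hsplit : (Finset.univ.filter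
        (fun a : {a : Fin k → ZMod 2 // a ≠ 0} => dotProduct (z + y) a.val = 1))
      = (Finset.univ.filter
          (fun a : {a : Fin k → ZMod 2 // a ≠ 0} =>
            dotProduct z a.val = 0 ∧ dotProduct y a.val = 1))
        ∪ (Finset.univ.filter
          (fun a : {a : Fin k → ZMod 2 // a ≠ 0} =>
            dotProduct z a.val = 1 ∧ dotProduct y a.val = 0)) := by
      rw [← Finset.filter_or]
      apply Finset.filter_congr
      intro a _
      rw [add_dotProduct]
      exact hpred _ _
    rw [hsplit, Finset.card_union_of_disjoint]
    rw [Finset.disjoint_left]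
    intro a ha hb
    simp only [mem_filter, mem_univ, true_and] at ha hb
    rw [ha.1] at hb
    exact one_ne_zero hb.1.symm
  rw [hsum]
  by_cases hyz : y = z
  · subst hyz
    have h0 : y + y = 0 := by
      funext j; simp [CharTwo.add_self_eq_zero]
    constructor
    · have : (Finset.univ.filter
          (fun a : {a : Fin k → ZMod 2 // a ≠ 0} =>
            dotProduct (y + y) a.val = 1)) = ∅ := by
        apply Finset.filter_false_of_mem
        intro a _
        rw [h0, zero_dotProduct]
        exact zero_ne_one
      rw [this]
      simp only [Finset.card_empty, Nat.cast_zero]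
      positivity
    · intro h; exact absurd rfl h
  · have hw : z + y ≠ 0 := by
      intro h
      apply hyz
      funext j
      have := congrFun h j
      simp only [Pi.add_apply, Pi.zero_apply] at this
      have h2 : z j + (z j + y j) = z j + 0 := by rw [this]
      rwa [← add_assoc, CharTwo.add_self_eq_zero, zero_add, add_zero] at h2
    have hc : ((Finset.univ.filter
          (fun a : {a : Fin k → ZMod 2 // a ≠ 0} =>
            dotProduct (z + y) a.val = 1)).card : ℝ) = (2:ℝ) ^ k / 2 := by
      rw [card_fiber_sub, card_fiber _ hw]
      have h2 : (2:ℝ) ^ k = 2 ^ (k - 1) * 2 := by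
        rw [← pow_succ, Nat.sub_add_cancel hk]
      rw [h2]
      push_cast
      ring
    exact ⟨le_of_eq hc, fun _ => hc⟩
end

section
/- Let G = (V, E) be a connected bipartite graph with bipartition {U, U'}, both parts nonempty, and let X ⊆ U' with 2 ≤ |X| ≤ 3. Suppose no proper vertex-induced subgraph of G is connected and contains X. Then G is a tree and every leaf of G belongs to X. -/
namespace TreeMinimalAux

open SimpleGraph

variable {V : Type} [DecidableEq V] {G : SimpleGraph V}

/-- Reachability within a vertex set `W`: there is a walk whose support stays in `W`. -/
def ReachW (G : SimpleGraph V) (W : Set V) (a b : V) : Prop :=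
  ∃ p : G.Walk a b, ∀ x ∈ p.support, x ∈ W

lemma ReachW.refl {W : Set V} {a : V} (ha : a ∈ W) : ReachW G W a a :=
  ⟨Walk.nil, by simpa using ha⟩

lemma ReachW.symm {W : Set V} {a b : V} (h : ReachW G W a b) : ReachW G W b a := by
  obtain ⟨p, hp⟩ := h
  exact ⟨p.reverse, fun x hx => hp x (by simpa [Walk.support_reverse] using hx)⟩

lemma ReachW.trans {W : Set V} {a b c : V} (h1 : ReachW G W a b) (h2 : ReachW G W b c) :
    ReachW G W a c := by
  obtain ⟨p, hp⟩ := h1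
  obtain ⟨q, hq⟩ := h2
  refine ⟨p.append q, fun x hx => ?_⟩
  rw [Walk.mem_support_append_iff] at hx
  exact hx.elim (hp x) (hq x)

lemma ReachW.mono {W W' : Set V} (hWW : W ⊆ W') {a b : V} (h : ReachW G W a b) :
    ReachW G W' a b := by
  obtain ⟨p, hp⟩ := h
  exact ⟨p, fun x hx => hWW (hp x hx)⟩

lemma ReachW.adj {W : Set V} {a b : V} (h : G.Adj a b) (ha : a ∈ W) (hb : b ∈ W) :
    ReachW G W a b :=
  ⟨Walk.cons h Walk.nil, by simp [ha, hb]⟩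

lemma reachW_of_mem_support {W : Set V} {a b x : V} (p : G.Walk a b)
    (hp : ∀ y ∈ p.support, y ∈ W) (hx : x ∈ p.support) : ReachW G W x b :=
  ⟨p.dropUntil x hx, fun y hy => hp y (Walk.support_dropUntil_subset p hx hy)⟩

lemma reach_induce {W : Set V} : ∀ {a b : V} (p : G.Walk a b),
    (∀ x ∈ p.support, x ∈ W) → ∀ (ha : a ∈ W) (hb : b ∈ W),
    (G.induce W).Reachable ⟨a, ha⟩ ⟨b, hb⟩ := by
  intro a b p
  induction p with
  | nil => intro _ ha hb; exact Reachable.refl _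
  | @cons a b' c h q ih =>
    intro hp ha hb
    have hb1 : b' ∈ W := hp _ (by simp)
    have hadj : (G.induce W).Adj ⟨a, ha⟩ ⟨b', hb1⟩ := by
      simpa using h
    exact hadj.reachable.trans (ih (fun x hx => hp x (by simp [hx])) hb1 hb)

lemma from_induce {W : Set V} : ∀ {A B : W} (q : (G.induce W).Walk A B),
    ReachW G W A.1 B.1 := by
  intro A B q
  induction q with
  | nil => rename_i A0; exact ReachW.refl A0.2
  | @cons A B' C h q ih =>
    have hadj : G.Adj A.1 B'.1 := by simpa using h
    exact (ReachW.adj hadj A.2 B'.2).trans ih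

lemma induce_connected_iff {W : Set V} :
    (G.induce W).Connected ↔ W.Nonempty ∧ ∀ a ∈ W, ∀ b ∈ W, ReachW G W a b := by
  constructor
  · intro h
    have hne : W.Nonempty := by
      obtain ⟨⟨a, ha⟩⟩ := h.nonempty
      exact ⟨a, ha⟩
    refine ⟨hne, fun a ha b hb => ?_⟩
    obtain ⟨q⟩ := h.preconnected ⟨a, ha⟩ ⟨b, hb⟩
    exact from_induce q
  · rintro ⟨hne, hr⟩
    have : Nonempty W := ⟨⟨hne.choose, hne.choose_spec⟩⟩
    refine ⟨fun A B => ?_⟩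
    obtain ⟨p, hp⟩ := hr A.1 A.2 B.1 B.2
    have := reach_induce p hp A.2 B.2
    simpa using this

lemma mem_tail_support_of_closed {a : V} {p : G.Walk a a} (hnil : ¬ p.Nil) {x : V}
    (hx : x ∈ p.support) : x ∈ p.support.tail := by
  obtain ⟨b, hb, r, rfl⟩ := Walk.not_nil_iff.mp hnil
  simp only [Walk.support_cons, List.tail_cons]
  simp only [Walk.support_cons, List.mem_cons] at hx
  rcases hx with rfl | hx
  · exact r.end_mem_support
  · exact hx

lemma exists_walk_count_one {u t v : V} (p : G.Walk u t) : v ∈ p.support → v ≠ u →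
    ∃ q : G.Walk u v, q.support.count v = 1 := by
  induction p with
  | nil =>
    intro hv hvu
    simp only [Walk.support_nil, List.mem_singleton] at hv
    exact absurd hv hvu
  | @cons a b c hadj r ih =>
    intro hv hvu
    by_cases hvb : v = b
    · subst hvb
      refine ⟨Walk.cons hadj Walk.nil, ?_⟩
      simp [List.count_cons, hvu, hvu.symm]
    · have hvr : v ∈ r.support := by
        simp only [Walk.support_cons, List.mem_cons] at hv
        rcases hv with rfl | hv
        · exact absurd rfl hvu
        · exact hv
      obtain ⟨q, hq⟩ := ih hvr hvb
      refine ⟨Walk.cons hadj q, ?_⟩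
      simpa [Walk.support_cons, List.count_cons, hvu, hvu.symm] using hq

lemma reach_of_count_one {u v x : V} (q : G.Walk u v) (hc : q.support.count v = 1)
    (hx : x ∈ q.support) (hxv : x ≠ v) : ReachW G {v}ᶜ u x := by
  classical
  have hspec := q.take_spec hx
  have hcount : (q.takeUntil x hx).support.count v
      + ((q.dropUntil x hx).support.tail).count v = 1 := by
    rw [← List.count_append, ← Walk.support_append, hspec]
    exact hc
  have hdnil : ¬ (q.dropUntil x hx).Nil := by
    intro h
    rw [Walk.nil_iff_length_eq] at h
    exact hxv (Walk.eq_of_length_eq_zero h)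
  obtain ⟨b2, hb2, r2, hr2⟩ := Walk.not_nil_iff.mp hdnil
  have hvtail : v ∈ (q.dropUntil x hx).support.tail := by
    rw [hr2]
    simp only [Walk.support_cons, List.tail_cons]
    exact r2.end_mem_support
  have hpos : ((q.dropUntil x hx).support.tail).count v ≠ 0 := fun h0 =>
    (List.count_eq_zero.mp h0) hvtail
  have htake0 : (q.takeUntil x hx).support.count v = 0 := by omega
  refine ⟨q.takeUntil x hx, fun y hy => ?_⟩
  simp only [Set.mem_compl_iff, Set.mem_singleton_iff]
  rintro rfl
  exact (List.count_eq_zero.mp htake0) hy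

lemma exists_penult {u v : V} (q : G.Walk u v) : u ≠ v → q.support.count v = 1 →
    ∃ x, G.Adj x v ∧ x ≠ v ∧ x ∈ q.support := by
  induction q with
  | nil => intro h _; exact absurd rfl h
  | @cons a b c hadj r ih =>
    intro huv hc
    cases r with
    | nil => exact ⟨a, hadj, huv, by simp⟩
    | @cons b d c hadj2 r2 =>
      have hbv : b ≠ c := by
        rintro rfl
        have hend : b ∈ r2.support := r2.end_mem_support
        simp only [Walk.support_cons, List.count_cons] at hc
        have h0 : r2.support.count b = 0 := by
          by_cases hab : a = b <;> by_cases hdb : d = b <;> simp_all <;> omega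
        exact (List.count_eq_zero.mp h0) hend
      have hcr : (Walk.cons hadj2 r2).support.count c = 1 := by
        have h1 : (Walk.cons hadj (Walk.cons hadj2 r2)).support.count c = 1 := hc
        simp only [Walk.support_cons, List.count_cons] at h1 ⊢
        have : ¬ (c = a) := fun h => huv h.symm
        simp_all
      obtain ⟨x, h1, h2, h3⟩ := ih hbv hcr
      exact ⟨x, h1, h2, by rw [Walk.support_cons]; exact List.mem_cons_of_mem _ h3⟩

lemma walk_parity {U : Set V} (hbip : ∀ v w : V, G.Adj v w → (v ∈ U ↔ w ∉ U)) :
    ∀ {a b : V} (p : G.Walk a b), Even p.length ↔ (a ∈ U ↔ b ∈ U) := by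
  intro a b p
  induction p with
  | nil => simp
  | @cons a b' c h q ih =>
    rw [Walk.length_cons, Nat.even_add_one, ih]
    have := hbip a b' h
    tauto

lemma cycle_reach {a v x y : V} {p : G.Walk a a} (hp : p.IsCycle) (hv : v ∈ p.support)
    (hx : x ∈ p.support) (hy : y ∈ p.support) (hxv : x ≠ v) (hyv : y ≠ v) :
    ReachW G {v}ᶜ x y := by
  have hnil : ¬ p.Nil := by
    rw [Walk.not_nil_iff_lt_length]
    have := hp.three_le_length
    omega
  have hq : (p.rotate v hv).IsCycle := hp.rotate hv
  have hqnil : ¬ (p.rotate v hv).Nil := by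
    rw [Walk.not_nil_iff_lt_length]
    have := hq.three_le_length
    omega
  have htail : ∀ z, z ∈ (p.rotate v hv).support.tail ↔ z ∈ p.support.tail := fun z =>
    (p.support_rotate v hv).perm.mem_iff
  have hxq : x ∈ (p.rotate v hv).support.tail := (htail x).mpr (mem_tail_support_of_closed hnil hx)
  have hyq : y ∈ (p.rotate v hv).support.tail := (htail y).mpr (mem_tail_support_of_closed hnil hy)
  obtain ⟨b, hb, s, hcons⟩ := Walk.not_nil_iff.mp hqnil
  have hs : s.support = (p.rotate v hv).support.tail := by rw [hcons]; simp
  have hsnodup : s.support.Nodup := hs ▸ hq.support_nodup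
  have hxs : x ∈ s.support := hs ▸ hxq
  have hys : y ∈ s.support := hs ▸ hyq
  have hslen : s.length ≠ 0 := by
    intro h0
    have hbv : b = v := Walk.eq_of_length_eq_zero h0
    have hsn : s.support = [b] := Walk.nil_iff_support_eq.mp (Walk.nil_iff_length_eq.mpr h0)
    rw [hsn] at hxs
    simp only [List.mem_singleton] at hxs
    exact hxv (hxs.trans hbv)
  obtain ⟨d, hd, t, hsrev⟩ := Walk.not_nil_iff.mp
    (by rw [Walk.not_nil_iff_lt_length, Walk.length_reverse]; omega : ¬ s.reverse.Nil)
  have ht : s.reverse.support = v :: t.support := by rw [hsrev]; simp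
  have hrevnodup : s.reverse.support.Nodup := by
    rw [Walk.support_reverse]
    exact List.nodup_reverse.mpr hsnodup
  have hvt : v ∉ t.support := by
    rw [ht] at hrevnodup
    exact (List.nodup_cons.mp hrevnodup).1
  have hmemt : ∀ z ∈ s.support, z ≠ v → z ∈ t.support := by
    intro z hz hzv
    have : z ∈ s.reverse.support := by rw [Walk.support_reverse]; exact List.mem_reverse.mpr hz
    rw [ht, List.mem_cons] at this
    rcases this with rfl | h
    · exact absurd rfl hzv
    · exact h
  have htW : ∀ z ∈ t.support, z ∈ ({v}ᶜ : Set V) := by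
    intro z hz
    simp only [Set.mem_compl_iff, Set.mem_singleton_iff]
    rintro rfl
    exact hvt hz
  exact (reachW_of_mem_support t htW (hmemt x hxs hxv)).trans
    (reachW_of_mem_support t htW (hmemt y hys hyv)).symm

lemma farthest {S : Set V} (hfin : S.Finite) (hne : S.Nonempty) {v : V} (hv : v ∉ S)
    (hreach : ∀ u ∈ S, ReachW G (S ∪ {v}) u v) :
    ∃ w ∈ S, ∀ u ∈ (S ∪ {v}) \ {w}, ReachW G ((S ∪ {v}) \ {w}) u v := by
  classical
  set D : V → Set ℕ := fun u => {n | ∃ p : G.Walk u v, (∀ x ∈ p.support, x ∈ S ∪ {v}) ∧ p.length = n}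
    with hD
  have hDne : ∀ u ∈ S ∪ {v}, (D u).Nonempty := by
    intro u hu
    rcases hu with hu | hu
    · obtain ⟨p, hp⟩ := hreach u hu
      exact ⟨p.length, p, hp, rfl⟩
    · rw [Set.mem_singleton_iff] at hu
      subst hu
      exact ⟨0, Walk.nil, by simp, rfl⟩
  set d : V → ℕ := fun u => sInf (D u) with hd
  obtain ⟨u0, hu0⟩ := hne
  obtain ⟨w, hwS, hwmax⟩ := Finset.exists_max_image hfin.toFinset d
    ⟨u0, hfin.mem_toFinset.mpr hu0⟩
  have hwS' : w ∈ S := hfin.mem_toFinset.mp hwS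
  have hwmax' : ∀ u ∈ S, d u ≤ d w := fun u hu => hwmax u (hfin.mem_toFinset.mpr hu)
  have hvw : v ≠ w := fun h => hv (h ▸ hwS')
  have main : ∀ n, ∀ u, u ∈ S ∪ {v} → u ≠ w → d u ≤ n → ReachW G ((S ∪ {v}) \ {w}) u v := by
    intro n
    induction n with
    | zero =>
      intro u hu huw hle
      obtain ⟨p, hp, hplen⟩ := Nat.sInf_mem (hDne u hu)
      have hplen' : p.length = d u := hplen
      have h0 : p.length = 0 := by omega
      have := Walk.eq_of_length_eq_zero h0
      subst this
      exact ReachW.refl ⟨Or.inr rfl, huw⟩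
    | succ n ih =>
      intro u hu huw hle
      by_cases huv : u = v
      · subst huv
        exact ReachW.refl ⟨Or.inr rfl, huw⟩
      obtain ⟨p, hp, hplen⟩ := Nat.sInf_mem (hDne u hu)
      have hplen' : p.length = d u := hplen
      have hplen0 : p.length ≠ 0 := fun h0 => huv (Walk.eq_of_length_eq_zero h0)
      obtain ⟨b, hadj, r, rfl⟩ := Walk.not_nil_iff.mp
        (by rw [Walk.not_nil_iff_lt_length]; exact Nat.pos_of_ne_zero hplen0)
      have hrsup : ∀ x ∈ r.support, x ∈ S ∪ {v} := fun x hx =>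
        hp x (by simp [Walk.support_cons, hx])
      have hlen' : r.length + 1 = d u := by
        rw [← hplen']
        simp [Walk.length_cons]
      have hdbr : d b ≤ r.length := Nat.sInf_le ⟨r, hrsup, rfl⟩
      have hbu : b ∈ S ∪ {v} := hrsup b r.start_mem_support
      have huS : u ∈ S := by
        rcases hu with h | h
        · exact h
        · exact absurd (Set.mem_singleton_iff.mp h) huv
      have hbw : b ≠ w := by
        rintro rfl
        have := hwmax' u huS
        omega
      have hdb : d b ≤ n := by omega
      have hmem1 : u ∈ (S ∪ {v}) \ {w} := ⟨hu, huw⟩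
      have hmem2 : b ∈ (S ∪ {v}) \ {w} := ⟨hbu, hbw⟩
      exact (ReachW.adj hadj hmem1 hmem2).trans (ih b hbu hbw hdb)
  exact ⟨w, hwS', fun u hu => main (d u) u hu.1 hu.2 le_rfl⟩

end TreeMinimalAux

open TreeMinimalAux SimpleGraph

/-- Let `G` be a connected bipartite graph with bipartition `{U, Uᶜ}`, both parts
nonempty, and let `X ⊆ Uᶜ` with `2 ≤ |X| ≤ 3`. Suppose no proper vertex-induced subgraph of
`G` is connected and contains `X`. Then `G` is a tree and every leaf (vertex of degree one)
of `G` belongs to `X`. -/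
theorem tree_of_minimal_connected_induced {V : Type} [Fintype V] [DecidableEq V]
    (G : SimpleGraph V) [DecidableRel G.Adj]
    (hconn : G.Connected)
    (U : Set V) (hU : U.Nonempty) (hU' : Uᶜ.Nonempty)
    (hbip : ∀ v w : V, G.Adj v w → (v ∈ U ↔ w ∉ U))
    (X : Finset V) (hXU : ∀ x ∈ X, x ∈ Uᶜ)
    (hX2 : 2 ≤ X.card) (hX3 : X.card ≤ 3)
    (hmin : ∀ W : Set V, W ≠ Set.univ → (↑X : Set V) ⊆ W → ¬ (G.induce W).Connected) :
    G.IsTree ∧ ∀ v : V, G.degree v = 1 → v ∈ X := by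
  classical
  -- Any vertex whose removal keeps connectivity must lie in `X`.
  have hkey : ∀ v : V, (G.induce ({v}ᶜ : Set V)).Connected → v ∈ X := by
    intro v hv
    by_contra hvX
    refine hmin {v}ᶜ ?_ ?_ hv
    · intro h
      have : v ∈ ({v}ᶜ : Set V) := h ▸ Set.mem_univ v
      simp at this
    · intro x hx
      simp only [Set.mem_compl_iff, Set.mem_singleton_iff]
      rintro rfl
      exact hvX (Finset.mem_coe.mp hx)
  -- Leaves belong to X.
  have hleaf : ∀ v : V, G.degree v = 1 → v ∈ X := by
    intro v hdeg
    apply hkey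
    obtain ⟨n, hn⟩ := Finset.card_eq_one.mp hdeg
    have hadjn : G.Adj v n := by
      have : n ∈ G.neighborFinset v := by rw [hn]; simp
      simpa using this
    have huniq : ∀ u, G.Adj v u → u = n := by
      intro u hu
      have : u ∈ G.neighborFinset v := by simpa using hu
      rw [hn] at this
      simpa using this
    have hnv : n ≠ v := hadjn.ne'
    rw [TreeMinimalAux.induce_connected_iff]
    refine ⟨⟨n, by simp [hnv]⟩, ?_⟩
    have hreachn : ∀ a ∈ ({v}ᶜ : Set V), ReachW G {v}ᶜ a n := by
      intro a ha
      have hav : a ≠ v := by simpa using ha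
      obtain ⟨p⟩ := hconn.preconnected a n
      by_cases hvp : v ∈ p.support
      · obtain ⟨q, hq⟩ := exists_walk_count_one p hvp (Ne.symm hav)
        obtain ⟨x, hxadj, hxv, hxmem⟩ := exists_penult q hav hq
        have hx : x = n := huniq x hxadj.symm
        subst hx
        exact reach_of_count_one q hq hxmem hxv
      · refine ⟨p, fun x hx => ?_⟩
        simp only [Set.mem_compl_iff, Set.mem_singleton_iff]
        rintro rfl
        exact hvp hx
    intro a ha b hb
    exact (hreachn a ha).trans (hreachn b hb).symm
  -- Acyclicity.
  have hacyc : G.IsAcyclic := by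
    intro a p hp
    have hlen3 := hp.three_le_length
    have heven : Even p.length := (walk_parity hbip p).mpr Iff.rfl
    have hlen4 : 4 ≤ p.length := by
      obtain ⟨k, hk⟩ := heven
      omega
    have hnil : ¬ p.Nil := by rw [Walk.not_nil_iff_lt_length]; omega
    set C : Finset V := p.support.tail.toFinset with hC
    have hnodup : p.support.tail.Nodup := hp.support_nodup
    have hCcard : C.card = p.length := by
      rw [hC, List.toFinset_card_of_nodup hnodup, List.length_tail, Walk.length_support]
      omega
    have hCsub : ∀ x ∈ C, x ∈ p.support := fun x hx =>
      List.mem_of_mem_tail (List.mem_toFinset.mp hx)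
    have hmemC : ∀ x ∈ p.support, x ∈ C := fun x hx =>
      List.mem_toFinset.mpr (mem_tail_support_of_closed hnil hx)
    obtain ⟨a₀, ha₀, b₀, hb₀, hab⟩ := Finset.one_lt_card.mp (by omega : 1 < C.card)
    set c : V → V := fun v => if v = a₀ then b₀ else a₀ with hc
    have hcC : ∀ v, c v ∈ C := by
      intro v
      rw [hc]
      dsimp only
      split <;> assumption
    have hcne : ∀ v, c v ≠ v := by
      intro v
      rw [hc]
      dsimp only
      split
      · rename_i h
        rw [h]
        exact Ne.symm hab
      · rename_i h
        exact fun h' => h h'.symm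
    have hcyc : ∀ v ∈ C, ∀ x, x ∈ C → x ≠ v → ∀ y, y ∈ C → y ≠ v → ReachW G {v}ᶜ x y := by
      intro v hv x hx hxv y hy hyv
      exact cycle_reach hp (hCsub v hv) (hCsub x hx) (hCsub y hy) hxv hyv
    set Kp : V → V → Prop := fun v u => u ≠ v ∧ ¬ ReachW G {v}ᶜ u (c v) with hKp
    -- fact A : vertices of C other than v are not in K_v
    have hfactA : ∀ v ∈ C, ∀ x ∈ C, x ≠ v → ¬ Kp v x := by
      intro v hv x hx hxv hK
      exact hK.2 (hcyc v hv x hx hxv (c v) (hcC v) (hcne v))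
    -- K-reach : every element of K_v reaches v within K_v ∪ {v}
    have hKreach : ∀ v, ∀ u, Kp v u → ReachW G ({u' | Kp v u'} ∪ {v}) u v := by
      intro v u hu
      obtain ⟨p0⟩ := hconn.preconnected u v
      obtain ⟨q, hq⟩ := exists_walk_count_one p0 p0.end_mem_support (Ne.symm hu.1)
      refine ⟨q, fun x hx => ?_⟩
      by_cases hxv : x = v
      · exact Or.inr hxv
      · left
        have hux : ReachW G {v}ᶜ u x := reach_of_count_one q hq hx hxv
        refine ⟨hxv, fun hxr => hu.2 (hux.trans hxr)⟩
    -- existence of the injection's values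
    have hex : ∀ v ∈ C, ∃ w, w ∈ X ∧ (w = v ∨ Kp v w) := by
      intro v hvC
      by_cases hvconn : (G.induce ({v}ᶜ : Set V)).Connected
      · exact ⟨v, hkey v hvconn, Or.inl rfl⟩
      · set K : Set V := {u | Kp v u} with hK
        have hcvK : c v ∈ ({v}ᶜ : Set V) := by
          simp only [Set.mem_compl_iff, Set.mem_singleton_iff]
          exact hcne v
        have hKne : K.Nonempty := by
          rw [TreeMinimalAux.induce_connected_iff] at hvconn
          push_neg at hvconn
          obtain ⟨a1, ha1, b1, hb1, hnr⟩ := hvconn ⟨c v, hcvK⟩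
          by_cases h1 : ReachW G {v}ᶜ a1 (c v)
          · by_cases h2 : ReachW G {v}ᶜ b1 (c v)
            · exact absurd (h1.trans h2.symm) hnr
            · exact ⟨b1, by simpa using hb1, h2⟩
          · exact ⟨a1, by simpa using ha1, h1⟩
        have hvK : v ∉ K := fun h => h.1 rfl
        obtain ⟨w, hwK, hwfar⟩ := farthest (Set.toFinite K) hKne hvK
          (fun u hu => hKreach v u hu)
        have hwv : w ≠ v := hwK.1
        have hwC : w ∉ C := fun h => hfactA v hvC w h hwv hwK
        have hwp : w ∉ p.support := fun h => hwC (hmemC w h)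
        have hwconn : (G.induce ({w}ᶜ : Set V)).Connected := by
          rw [TreeMinimalAux.induce_connected_iff]
          have hvw : v ∈ ({w}ᶜ : Set V) := by
            simp only [Set.mem_compl_iff, Set.mem_singleton_iff]
            exact Ne.symm hwv
          refine ⟨⟨v, hvw⟩, ?_⟩
          have hall : ∀ u ∈ ({w}ᶜ : Set V), ReachW G {w}ᶜ u v := by
            intro u hu
            have huw : u ≠ w := by simpa using hu
            by_cases huv : u = v
            · subst huv
              exact ReachW.refl hvw
            by_cases huK : Kp v u
            · refine (hwfar u ⟨Or.inl huK, ?_⟩).mono ?_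
              · simpa using huw
              · intro x hx
                simp only [Set.mem_compl_iff, Set.mem_singleton_iff]
                intro hxw
                exact hx.2 (by simpa using hxw)
            · have hreach_c : ReachW G {v}ᶜ u (c v) := by
                by_contra h
                exact huK ⟨huv, h⟩
              obtain ⟨q, hqsup⟩ := hreach_c
              have hwq : w ∉ q.support := by
                intro hwq
                exact hwK.2 (reachW_of_mem_support q hqsup hwq)
              have h1 : ReachW G {w}ᶜ u (c v) := by
                refine ⟨q, fun x hx => ?_⟩
                simp only [Set.mem_compl_iff, Set.mem_singleton_iff]
                rintro rfl
                exact hwq hx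
              have hpW : ∀ y ∈ p.support, y ∈ ({w}ᶜ : Set V) := by
                intro y hy
                simp only [Set.mem_compl_iff, Set.mem_singleton_iff]
                rintro rfl
                exact hwp hy
              have h2 : ReachW G {w}ᶜ (c v) v :=
                (reachW_of_mem_support p hpW (hCsub _ (hcC v))).trans
                  (reachW_of_mem_support p hpW (hCsub v hvC)).symm
              exact h1.trans h2
          intro a1 ha1 b1 hb1
          exact (hall a1 ha1).trans (hall b1 hb1).symm
        exact ⟨w, hkey w hwconn, Or.inr hwK⟩
    have hex' : ∀ v : V, ∃ w, v ∈ C → (w ∈ X ∧ (w = v ∨ Kp v w)) := by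
      intro v
      by_cases h : v ∈ C
      · obtain ⟨w, hw⟩ := hex v h
        exact ⟨w, fun _ => hw⟩
      · exact ⟨v, fun h' => absurd h' h⟩
    choose f hf using hex'
    have hmaps : ∀ v ∈ C, f v ∈ X := fun v hv => (hf v hv).1
    have hinj : Set.InjOn f ↑C := by
      intro v1 hv1 v2 hv2 heq
      by_contra hne
      have hv1' : v1 ∈ C := Finset.mem_coe.mp hv1
      have hv2' : v2 ∈ C := Finset.mem_coe.mp hv2
      rcases (hf v1 hv1').2 with h1 | h1 <;> rcases (hf v2 hv2').2 with h2 | h2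
      · exact hne (h1 ▸ h2 ▸ heq)
      · -- f v1 = v1 ∈ C, f v2 ∈ K v2
        have : Kp v2 v1 := h1 ▸ heq ▸ h2
        exact hfactA v2 hv2' v1 hv1' (fun h => hne h) this
      · have : Kp v1 v2 := h2 ▸ heq.symm ▸ h1
        exact hfactA v1 hv1' v2 hv2' (fun h => hne h.symm) this
      · -- both in K's
        set w := f v1 with hw
        have hK1 : Kp v1 w := h1
        have hK2 : Kp v2 w := heq ▸ h2
        have hr1 : ReachW G ({u' | Kp v1 u'} ∪ {v1}) w v1 := hKreach v1 w hK1
        have hsub : ({u' | Kp v1 u'} ∪ {v1} : Set V) ⊆ {v2}ᶜ := by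
          rintro x (hx | hx)
          · simp only [Set.mem_compl_iff, Set.mem_singleton_iff]
            rintro rfl
            exact hfactA v1 hv1' x hv2' (fun h => hne h.symm) hx
          · rw [Set.mem_singleton_iff] at hx
            subst hx
            simp only [Set.mem_compl_iff, Set.mem_singleton_iff]
            exact hne
        have hr2 : ReachW G {v2}ᶜ w v1 := hr1.mono hsub
        have hr3 : ReachW G {v2}ᶜ v1 (c v2) :=
          hcyc v2 hv2' v1 hv1' hne (c v2) (hcC v2) (hcne v2)
        exact hK2.2 (hr2.trans hr3)
    have hcard := Finset.card_le_card_of_injOn f hmaps hinj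
    omega
  exact ⟨⟨hconn, hacyc⟩, hleaf⟩
end

section
/- A set S ⊆ {0,1}^n is an affine binary space (i.e., a △ b △ c ∈ S for all a, b, c ∈ S) if and only if cuboid(S) is a binary clutter, i.e., for any three members C₁, C₂, C₃ of cuboid(S), the symmetric difference C₁ △ C₂ △ C₃ contains a member of cuboid(S). -/
/-- The member of `cuboid(S)` corresponding to a point `p ∈ {0,1}^n`. The ground set of the
cuboid is `Fin n × ZMod 2`, where `(i, 1)` plays the role of coordinate `2i - 1` ("`x_i`")
and `(i, 0)` the role of coordinate `2i` ("`1 - x_i`"); the member of `p` has incidence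
vector `(p_1, 1 - p_1, …, p_n, 1 - p_n)`. -/
def cuboidMember {n : ℕ} (p : Fin n → ZMod 2) : Finset (Fin n × ZMod 2) :=
  Finset.univ.filter (fun e => p e.1 = e.2)

lemma symmDiff_cuboid {n : ℕ} (a b c : Fin n → ZMod 2) :
    symmDiff (symmDiff (cuboidMember a) (cuboidMember b)) (cuboidMember c)
      = cuboidMember (a + b + c) := by
  ext e
  simp only [cuboidMember, Finset.mem_symmDiff, Finset.mem_filter, Finset.mem_univ, true_and,
    Pi.add_apply]
  generalize a e.1 = x
  generalize b e.1 = y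
  generalize c e.1 = z
  generalize e.2 = w
  revert x y z w
  decide

lemma cuboid_subset {n : ℕ} {d p : Fin n → ZMod 2} (h : cuboidMember d ⊆ cuboidMember p) :
    d = p := by
  funext i
  have := h (show (i, d i) ∈ cuboidMember d by simp [cuboidMember])
  rw [cuboidMember, Finset.mem_filter] at this; exact this.2.symm

/-- A set `S ⊆ {0,1}^n` is an affine binary space (`a △ b △ c ∈ S` for all
`a, b, c ∈ S`) if and only if `cuboid(S)` is a binary clutter, i.e. for any three members,
their symmetric difference contains a member. -/
theorem affine_binary_space_iff_cuboid_binary (n : ℕ) (S : Set (Fin n → ZMod 2)) :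
    (∀ a ∈ S, ∀ b ∈ S, ∀ c ∈ S, a + b + c ∈ S) ↔
    (∀ a ∈ S, ∀ b ∈ S, ∀ c ∈ S, ∃ d ∈ S,
      cuboidMember d ⊆ symmDiff (symmDiff (cuboidMember a) (cuboidMember b)) (cuboidMember c)) := by
  constructor
  · intro h a ha b hb c hc
    exact ⟨a + b + c, h a ha b hb c hc, by rw [symmDiff_cuboid]⟩
  · intro h a ha b hb c hc
    obtain ⟨d, hd, hsub⟩ := h a ha b hb c hc
    rw [symmDiff_cuboid] at hsub
    rwa [← cuboid_subset hsub]
end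

section
/- A clutter C is binary (the symmetric difference of any three members contains a member) if and only if |C ∩ B| is odd for every member C ∈ C and every minimal cover B ∈ b(C). -/
namespace BinClutter
set_option linter.unusedSectionVars false
set_option maxHeartbeats 2000000
variable {V : Type} [Fintype V] [DecidableEq V]

def Cov (𝒞 : Finset (Finset V)) (B : Finset V) : Prop := ∀ C ∈ 𝒞, (B ∩ C).Nonempty

def MinCov (𝒞 : Finset (Finset V)) (B : Finset V) : Prop :=
  Cov 𝒞 B ∧ ∀ B' ⊂ B, ¬ Cov 𝒞 B'

def Antich (𝒞 : Finset (Finset V)) : Prop := ∀ C ∈ 𝒞, ∀ C' ∈ 𝒞, C ⊆ C' → C = C'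

def Bin (𝒞 : Finset (Finset V)) : Prop :=
  ∀ C₁ ∈ 𝒞, ∀ C₂ ∈ 𝒞, ∀ C₃ ∈ 𝒞, ∃ C ∈ 𝒞, C ⊆ symmDiff (symmDiff C₁ C₂) C₃

lemma mem_symm3 {x : V} {a b c : Finset V} :
    x ∈ symmDiff (symmDiff a b) c ↔
      ((x ∈ a ∧ x ∉ b ∧ x ∉ c) ∨ (x ∈ b ∧ x ∉ a ∧ x ∉ c) ∨ (x ∈ c ∧ x ∉ a ∧ x ∉ b)
        ∨ (x ∈ a ∧ x ∈ b ∧ x ∈ c)) := by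
  simp only [Finset.mem_symmDiff]; tauto

lemma card_symmDiff_mod (s t : Finset V) :
    (symmDiff s t).card % 2 = (s.card + t.card) % 2 := by
  have h0 : symmDiff s t = (s ∪ t) \ (s ∩ t) := by
    ext x; simp only [Finset.mem_symmDiff, Finset.mem_sdiff, Finset.mem_union, Finset.mem_inter]
    tauto
  have h1 : (symmDiff s t).card = (s ∪ t).card - (s ∩ t).card := by
    rw [h0]; exact Finset.card_sdiff_of_subset (Finset.inter_subset_union)
  have h2 := Finset.card_union_add_card_inter s t
  have h3 : (s ∩ t).card ≤ (s ∪ t).card := Finset.card_le_card Finset.inter_subset_union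
  omega

lemma inter_symmDiff_distrib (B s t : Finset V) :
    B ∩ (symmDiff s t) = symmDiff (B ∩ s) (B ∩ t) := by
  ext x; simp only [Finset.mem_symmDiff, Finset.mem_inter]; tauto

lemma exists_Cb {𝒞 : Finset (Finset V)} {B : Finset V} (h : MinCov 𝒞 B) {b : V} (hb : b ∈ B) :
    ∃ C ∈ 𝒞, B ∩ C = {b} := by
  have h2 := h.2 (B.erase b) (Finset.erase_ssubset hb)
  unfold Cov at h2
  push_neg at h2
  obtain ⟨C, hC, hCne⟩ := h2
  refine ⟨C, hC, ?_⟩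
  have hsub : B ∩ C ⊆ {b} := by
    intro x hx
    simp only [Finset.mem_inter] at hx
    simp only [Finset.mem_singleton]
    by_contra hxb
    have : x ∈ B.erase b ∩ C := by
      simp [Finset.mem_erase, hxb, hx.1, hx.2]
    rw [hCne] at this; exact absurd this (Finset.notMem_empty x)
  have hne : (B ∩ C).Nonempty := h.1 C hC
  rcases Finset.subset_singleton_iff.1 hsub with h' | h'
  · rw [h'] at hne; exact absurd hne (by simp)
  · exact h'

lemma exists_minCov (𝒞 : Finset (Finset V)) :
    ∀ K : Finset V, Cov 𝒞 K → ∃ B, B ⊆ K ∧ MinCov 𝒞 B := by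
  intro K
  induction K using Finset.strongInduction with
  | _ K ih =>
    intro hK
    by_cases h : ∃ B' ⊂ K, Cov 𝒞 B'
    · obtain ⟨B', hB', hcov⟩ := h
      obtain ⟨B, hBsub, hB⟩ := ih B' hB' hcov
      exact ⟨B, hBsub.trans hB'.subset, hB⟩
    · push_neg at h
      exact ⟨K, subset_rfl, hK, fun B' hB' => h B' hB'⟩

def contr (𝒞 : Finset (Finset V)) (u : V) : Finset (Finset V) :=
  (𝒞.image (fun C => C.erase u)).filter
    (fun X => ∀ Y ∈ 𝒞.image (fun C => C.erase u), ¬ Y ⊂ X)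

lemma contr_mem_image {𝒞 : Finset (Finset V)} {u : V} {X : Finset V} (h : X ∈ contr 𝒞 u) :
    X ∈ 𝒞.image (fun C => C.erase u) := (Finset.mem_filter.1 h).1

lemma contr_not_mem {𝒞 : Finset (Finset V)} {u : V} {X : Finset V} (h : X ∈ contr 𝒞 u) :
    u ∉ X := by
  obtain ⟨C, _, hCX⟩ := Finset.mem_image.1 (contr_mem_image h)
  rw [← hCX]; exact Finset.notMem_erase u C

lemma image_sub (𝒞 : Finset (Finset V)) (u : V) :
    ∀ X, X ∈ 𝒞.image (fun C => C.erase u) → ∃ M ∈ contr 𝒞 u, M ⊆ X := by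
  intro X
  induction X using Finset.strongInduction with
  | _ X ih =>
    intro hX
    by_cases h : ∃ Y ∈ 𝒞.image (fun C => C.erase u), Y ⊂ X
    · obtain ⟨Y, hY, hYX⟩ := h
      obtain ⟨M, hM, hMY⟩ := ih Y hYX hY
      exact ⟨M, hM, hMY.trans hYX.subset⟩
    · push_neg at h
      exact ⟨X, Finset.mem_filter.2 ⟨hX, h⟩, subset_rfl⟩

lemma contr_sub {𝒞 : Finset (Finset V)} {u : V} {C : Finset V} (hC : C ∈ 𝒞) :
    ∃ M ∈ contr 𝒞 u, M ⊆ C.erase u :=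
  image_sub 𝒞 u _ (Finset.mem_image.2 ⟨C, hC, rfl⟩)

lemma contr_antich (𝒞 : Finset (Finset V)) (u : V) : Antich (contr 𝒞 u) := by
  intro M hM M' hM' hsub
  by_contra hne
  exact (Finset.mem_filter.1 hM').2 M (contr_mem_image hM) (ssubset_of_subset_of_ne hsub hne)

lemma contr_bin {𝒞 : Finset (Finset V)} {u : V} (hbin : Bin 𝒞) : Bin (contr 𝒞 u) := by
  intro X₁ hX₁ X₂ hX₂ X₃ hX₃
  obtain ⟨C₁, hC₁, hE₁⟩ := Finset.mem_image.1 (contr_mem_image hX₁)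
  obtain ⟨C₂, hC₂, hE₂⟩ := Finset.mem_image.1 (contr_mem_image hX₂)
  obtain ⟨C₃, hC₃, hE₃⟩ := Finset.mem_image.1 (contr_mem_image hX₃)
  obtain ⟨M, hM, hMsub⟩ := hbin C₁ hC₁ C₂ hC₂ C₃ hC₃
  obtain ⟨M', hM', hM'sub⟩ := contr_sub (u := u) hM
  refine ⟨M', hM', hM'sub.trans ?_⟩
  intro x hx
  rw [Finset.mem_erase] at hx
  have hxM := hMsub hx.2
  have hxu : x ≠ u := hx.1
  simp only [Finset.mem_symmDiff] at hxM ⊢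
  rw [← hE₁, ← hE₂, ← hE₃]
  simp only [Finset.mem_erase, hxu, ne_eq, not_false_eq_true, true_and]
  exact hxM

lemma contr_mincov {𝒞 : Finset (Finset V)} {u : V} {B : Finset V} (hu : u ∉ B)
    (hmc : MinCov 𝒞 B) : MinCov (contr 𝒞 u) B := by
  constructor
  · intro X hX
    obtain ⟨C, hC, hE⟩ := Finset.mem_image.1 (contr_mem_image hX)
    obtain ⟨b, hb⟩ := hmc.1 C hC
    rw [Finset.mem_inter] at hb
    refine ⟨b, ?_⟩
    rw [Finset.mem_inter, ← hE, Finset.mem_erase]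
    exact ⟨hb.1, fun hbu => hu (hbu ▸ hb.1), hb.2⟩
  · intro B' hB' hcov
    have h := hmc.2 B' hB'
    unfold Cov at h; push_neg at h
    obtain ⟨C, hC, hCne⟩ := h
    obtain ⟨M, hM, hMsub⟩ := contr_sub (u := u) hC
    obtain ⟨b, hb⟩ := hcov M hM
    rw [Finset.mem_inter] at hb
    exact (Finset.nonempty_iff_ne_empty.1 ⟨b, Finset.mem_inter.2 ⟨hb.1, (Finset.mem_erase.1 (hMsub hb.2)).2⟩⟩) hCne

lemma contr_survive_mem {𝒞 : Finset (Finset V)} {u : V} {C : Finset V} (hA : Antich 𝒞)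
    (hC : C ∈ 𝒞) (huC : u ∈ C) : C.erase u ∈ contr 𝒞 u := by
  refine Finset.mem_filter.2 ⟨Finset.mem_image.2 ⟨C, hC, rfl⟩, ?_⟩
  intro Y hY hYsub
  obtain ⟨C', hC', hE⟩ := Finset.mem_image.1 hY
  have hsub : C' ⊆ C := by
    intro x hx
    by_cases hxu : x = u
    · exact hxu ▸ huC
    · have : x ∈ C'.erase u := Finset.mem_erase.2 ⟨hxu, hx⟩
      rw [hE] at this
      exact (Finset.mem_erase.1 (hYsub.subset this)).2
  have := hA C' hC' C hC hsub
  rw [this] at hE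
  exact hYsub.ne hE.symm

lemma contr_survive_unkilled {𝒞 : Finset (Finset V)} {u : V} {C : Finset V}
    (hC : C ∈ 𝒞) (huC : u ∉ C) (h : ∀ C' ∈ 𝒞, ¬ C'.erase u ⊂ C) : C ∈ contr 𝒞 u := by
  refine Finset.mem_filter.2 ⟨Finset.mem_image.2 ⟨C, hC, Finset.erase_eq_self.2 huC⟩, ?_⟩
  intro Y hY hYsub
  obtain ⟨C', hC', hE⟩ := Finset.mem_image.1 hY
  exact h C' hC' (hE ▸ hYsub)

lemma contr_sup_sub {𝒞 : Finset (Finset V)} {u : V} {X : Finset V} (h : X ∈ contr 𝒞 u) :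
    X ⊆ 𝒞.sup id := by
  obtain ⟨C, hC, hE⟩ := Finset.mem_image.1 (contr_mem_image h)
  rw [← hE]
  exact (Finset.erase_subset u C).trans (Finset.le_sup (f := id) hC)

lemma main_odd : ∀ n : ℕ, ∀ (𝒞 : Finset (Finset V)) (B : Finset V),
    Antich 𝒞 → Bin 𝒞 → MinCov 𝒞 B → ((𝒞.sup id) \ B).card ≤ n →
    ∀ C ∈ 𝒞, Odd ((B ∩ C).card) := by
  intro n
  induction n using Nat.strong_induction_on with
  | _ n IH =>
  intro 𝒞 B hA hbin hmc hcard C hC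
  classical
  -- applying the induction hypothesis after contracting at u ∉ B
  have IHC : ∀ u, u ∉ B → u ∈ 𝒞.sup id → ∀ X ∈ contr 𝒞 u, Odd ((B ∩ X).card) := by
    intro u huB husup
    have husd : u ∈ 𝒞.sup id \ B := Finset.mem_sdiff.2 ⟨husup, huB⟩
    have hsub : (contr 𝒞 u).sup id \ B ⊆ ((𝒞.sup id) \ B).erase u := by
      intro x hx
      rw [Finset.mem_sdiff, Finset.mem_sup] at hx
      obtain ⟨⟨X, hX, hxX⟩, hxB⟩ := hx
      refine Finset.mem_erase.2 ⟨fun hxu => contr_not_mem hX (hxu ▸ hxX), ?_⟩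
      exact Finset.mem_sdiff.2 ⟨contr_sup_sub hX hxX, hxB⟩
    have hlt : ((contr 𝒞 u).sup id \ B).card < n := by
      have h1 := Finset.card_le_card hsub
      have h2 : (((𝒞.sup id) \ B).erase u).card = ((𝒞.sup id) \ B).card - 1 :=
        Finset.card_erase_of_mem husd
      have h3 : 1 ≤ ((𝒞.sup id) \ B).card := Finset.card_pos.2 ⟨u, husd⟩
      omega
    exact IH _ hlt (contr 𝒞 u) B (contr_antich _ _) (contr_bin hbin)
      (contr_mincov huB hmc) le_rfl
  -- F1 : members meeting the outside of B have odd trace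
  have F1 : ∀ M ∈ 𝒞, ∀ u, u ∈ M → u ∉ B → Odd ((B ∩ M).card) := by
    intro M hM u huM huB
    have hodd := IHC u huB ((Finset.le_sup (f := id) hM) huM) (M.erase u)
      (contr_survive_mem hA hM huM)
    have heq : B ∩ M.erase u = B ∩ M := by
      ext x
      simp only [Finset.mem_inter, Finset.mem_erase]
      exact ⟨fun ⟨h1, _, h3⟩ => ⟨h1, h3⟩, fun ⟨h1, h2⟩ => ⟨h1, fun hxu => huB (hxu ▸ h1), h2⟩⟩
    rwa [heq] at hodd
  by_cases hCB : C ⊆ B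
  case neg =>
    obtain ⟨u, huC, huB⟩ := Finset.not_subset.1 hCB
    exact F1 C hC u huC huB
  case pos =>
  have hBC : B ∩ C = C := Finset.inter_eq_right.2 hCB
  rw [hBC]
  by_contra heven
  have hCne : C.Nonempty := by have := hmc.1 C hC; rwa [hBC] at this
  have hCeven : C.card % 2 = 0 := by
    rcases Nat.even_or_odd C.card with h | h
    · exact Nat.even_iff.1 h
    · exact absurd h heven
  -- antichain violation helper
  have hsubC : ∀ Z ∈ 𝒞, ∀ S : Finset V, Z ⊆ S → S ⊆ C → S ≠ C → False := by
    intro Z hZ S hZS hSC hSne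
    have := hA Z hZ C hC (hZS.trans hSC)
    exact hSne (Finset.Subset.antisymm hSC (this ▸ hZS))
  have hBinsert : ∀ (u : V) (t : Finset V), u ∉ B → t ⊆ B → B ∩ insert u t = t := by
    intro u t huB htB
    ext x
    simp only [Finset.mem_inter, Finset.mem_insert]
    constructor
    · rintro ⟨hxB, (rfl | hxt)⟩
      · exact absurd hxB huB
      · exact hxt
    · intro hxt; exact ⟨htB hxt, Or.inr hxt⟩
  -- K1 : every vertex u outside B in the support yields a unique "killer" insert u t
  have K1 : ∀ u, u ∉ B → u ∈ 𝒞.sup id →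
      ∃ t : Finset V, t ⊆ C ∧ t ≠ C ∧ u ∉ t ∧ insert u t ∈ 𝒞 := by
    intro u huB husup
    by_cases hk : ∃ C' ∈ 𝒞, C'.erase u ⊂ C
    · obtain ⟨C', hC', hss⟩ := hk
      have huC' : u ∈ C' := by
        by_contra huC'
        rw [Finset.erase_eq_self.2 huC'] at hss
        exact hss.ne (hA C' hC' C hC hss.subset)
      exact ⟨C'.erase u, hss.subset, hss.ne, Finset.notMem_erase u C',
        by rwa [Finset.insert_erase huC']⟩
    · exfalso
      push_neg at hk
      have huC : u ∉ C := fun h => huB (hCB h)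
      have hmem : C ∈ contr 𝒞 u := contr_survive_unkilled hC huC hk
      have := IHC u huB husup C hmem
      rw [hBC] at this
      exact heven this
  -- uniqueness of the killer at a given u
  have uniq : ∀ (u : V) (t t' : Finset V), u ∉ B → t ⊆ C → t' ⊆ C → u ∉ t → u ∉ t' →
      insert u t ∈ 𝒞 → insert u t' ∈ 𝒞 → t = t' := by
    intro u t t' huB htC ht'C hut hut' hY hY'
    by_contra hne
    obtain ⟨Z, hZ, hZsub⟩ := hbin C hC (insert u t) hY (insert u t') hY'
    have hZC : Z ⊆ C \ symmDiff t t' := by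
      intro x hxZ
      have hx := mem_symm3.1 (hZsub hxZ)
      simp only [Finset.mem_insert] at hx
      have m1 : x ∈ t → x ∈ C := fun h => htC h
      have m2 : x ∈ t' → x ∈ C := fun h => ht'C h
      have m3 : x = u → x ∉ C := fun h hc => huB (hCB (h ▸ hc))
      rw [Finset.mem_sdiff, Finset.mem_symmDiff]
      tauto
    have hsymne : (symmDiff t t').Nonempty := by
      rw [Finset.nonempty_iff_ne_empty]
      intro h
      apply hne
      have : symmDiff t t' = (⊥ : Finset V) := h
      exact symmDiff_eq_bot.1 this
    obtain ⟨y, hy⟩ := hsymne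
    have hyC : y ∈ C := by
      rcases Finset.mem_symmDiff.1 hy with h | h
      · exact htC h.1
      · exact ht'C h.1
    refine hsubC Z hZ _ hZC Finset.sdiff_subset (fun h => ?_)
    have : y ∈ C \ symmDiff t t' := by rw [h]; exact hyC
    exact (Finset.mem_sdiff.1 this).2 hy
  -- comparability of killers
  have comp : ∀ (u u' : V) (t t' : Finset V), u ∉ B → u' ∉ B → t ⊆ C → t' ⊆ C →
      u ∉ t → u' ∉ t' → insert u t ∈ 𝒞 → insert u' t' ∈ 𝒞 →
      t ⊆ t' ∨ t' ⊆ t := by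
    intro u u' t t' huB hu'B htC ht'C hut hu't' hY hY'
    by_cases htt' : t = t'
    · exact Or.inl (htt' ▸ subset_rfl)
    by_cases huu' : u = u'
    · exact absurd (uniq u t t' huB htC ht'C hut (huu' ▸ hu't') hY (huu' ▸ hY')) htt'
    obtain ⟨Z, hZ, hZsub⟩ := hbin C hC (insert u t) hY (insert u' t') hY'
    have huC : u ∉ C := fun h => huB (hCB h)
    have hu'C : u' ∉ C := fun h => hu'B (hCB h)
    have hut' : u ∉ t' := fun h => huC (ht'C h)
    have hu't : u' ∉ t := fun h => hu'C (htC h)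
    have hbound : ∀ x ∈ Z, x ≠ u → x ≠ u' → x ∈ C \ symmDiff t t' := by
      intro x hxZ hxu hxu'
      have hx := mem_symm3.1 (hZsub hxZ)
      simp only [Finset.mem_insert] at hx
      have m1 : x ∈ t → x ∈ C := fun h => htC h
      have m2 : x ∈ t' → x ∈ C := fun h => ht'C h
      rw [Finset.mem_sdiff, Finset.mem_symmDiff]
      tauto
    have hsymne : (symmDiff t t').Nonempty := by
      rw [Finset.nonempty_iff_ne_empty]
      intro h
      exact htt' (symmDiff_eq_bot.1 h)
    obtain ⟨y, hy⟩ := hsymne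
    have hyC : y ∈ C := by
      rcases Finset.mem_symmDiff.1 hy with h | h
      · exact htC h.1
      · exact ht'C h.1
    have hSne : C \ symmDiff t t' ≠ C := by
      intro h
      have : y ∈ C \ symmDiff t t' := by rw [h]; exact hyC
      exact (Finset.mem_sdiff.1 this).2 hy
    by_cases huZ : u ∈ Z <;> by_cases hu'Z : u' ∈ Z
    · -- both in Z : parity contradiction
      exfalso
      have hoZ : Odd ((B ∩ Z).card) := F1 Z hZ u huZ huB
      have hot : Odd (t.card) := by
        have := F1 (insert u t) hY u (Finset.mem_insert_self u t) huB
        rwa [hBinsert u t huB (htC.trans hCB)] at this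
      have hot' : Odd (t'.card) := by
        have := F1 (insert u' t') hY' u' (Finset.mem_insert_self u' t') hu'B
        rwa [hBinsert u' t' hu'B (ht'C.trans hCB)] at this
      obtain ⟨M, hM, hMsub⟩ := hbin Z hZ (insert u t) hY (insert u' t') hY'
      have hMS : M ⊆ symmDiff (symmDiff (B ∩ Z) t) t' := by
        intro x hxM
        have hx := mem_symm3.1 (hMsub hxM)
        simp only [Finset.mem_insert] at hx
        rw [mem_symm3]
        simp only [Finset.mem_inter]
        by_cases hxu : x = u
        · exfalso; subst hxu; tauto
        by_cases hxu' : x = u'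
        · exfalso; subst hxu'; tauto
        by_cases hxB : x ∈ B
        · tauto
        · exfalso
          have hxZ : x ∉ Z := by
            intro hxZ
            exact hxB (hCB (Finset.mem_sdiff.1 (hbound x hxZ hxu hxu')).1)
          have hxt : x ∉ t := fun h => hxB ((htC.trans hCB) h)
          have hxt' : x ∉ t' := fun h => hxB ((ht'C.trans hCB) h)
          tauto
      have hSC : symmDiff (symmDiff (B ∩ Z) t) t' ⊆ C := by
        intro x hx
        rw [mem_symm3] at hx
        have h1 : x ∈ B ∩ Z → x ∈ C := by
          intro h
          have h' := Finset.mem_inter.1 h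
          exact (Finset.mem_sdiff.1 (hbound x h'.2 (fun e => huB (e ▸ h'.1))
            (fun e => hu'B (e ▸ h'.1)))).1
        have h2 : x ∈ t → x ∈ C := fun h => htC h
        have h3 : x ∈ t' → x ∈ C := fun h => ht'C h
        tauto
      by_cases hSeq : symmDiff (symmDiff (B ∩ Z) t) t' = C
      · have p1 := card_symmDiff_mod (symmDiff (B ∩ Z) t) t'
        have p2 := card_symmDiff_mod (B ∩ Z) t
        rw [hSeq] at p1
        rw [Nat.odd_iff] at hoZ hot hot'
        omega
      · exact hsubC M hM _ hMS hSC hSeq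
    · -- u ∈ Z, u' ∉ Z : t ⊆ t'
      left
      have hs : Z.erase u ⊆ C \ symmDiff t t' := by
        intro x hx
        rw [Finset.mem_erase] at hx
        exact hbound x hx.2 hx.1 (fun h => hu'Z (h ▸ hx.2))
      have hZeq : insert u (Z.erase u) = Z := Finset.insert_erase huZ
      have hteq : Z.erase u = t := by
        refine uniq u (Z.erase u) t huB ?_ htC (Finset.notMem_erase u Z) hut ?_ hY
        · exact fun x hx => (Finset.mem_sdiff.1 (hs hx)).1
        · rw [hZeq]; exact hZ
      intro x hxt
      have : x ∈ C \ symmDiff t t' := hs (hteq ▸ hxt)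
      have hnd := (Finset.mem_sdiff.1 this).2
      rw [Finset.mem_symmDiff] at hnd
      by_contra hxt'
      exact hnd (Or.inl ⟨hxt, hxt'⟩)
    · -- u' ∈ Z, u ∉ Z : t' ⊆ t
      right
      have hs : Z.erase u' ⊆ C \ symmDiff t t' := by
        intro x hx
        rw [Finset.mem_erase] at hx
        exact hbound x hx.2 (fun h => huZ (h ▸ hx.2)) hx.1
      have hZeq : insert u' (Z.erase u') = Z := Finset.insert_erase hu'Z
      have hteq : Z.erase u' = t' := by
        refine uniq u' (Z.erase u') t' hu'B ?_ ht'C (Finset.notMem_erase u' Z) hu't' ?_ hY'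
        · exact fun x hx => (Finset.mem_sdiff.1 (hs hx)).1
        · rw [hZeq]; exact hZ
      intro x hxt'
      have : x ∈ C \ symmDiff t t' := hs (hteq ▸ hxt')
      have hnd := (Finset.mem_sdiff.1 this).2
      rw [Finset.mem_symmDiff] at hnd
      by_contra hxt
      exact hnd (Or.inr ⟨hxt', hxt⟩)
    · -- neither : member inside a proper subset of C
      exact absurd (hsubC Z hZ _ (fun x hx => hbound x hx
        (fun h => huZ (h ▸ hx)) (fun h => hu'Z (h ▸ hx))) Finset.sdiff_subset hSne) not_false
  by_cases hU : ∃ u, u ∈ 𝒞.sup id ∧ u ∉ B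
  case neg =>
    -- all members inside B : they are singletons, contradiction with C even
    push_neg at hU
    obtain ⟨b, hbC⟩ := hCne
    obtain ⟨Cb, hCbmem, hCbB⟩ := exists_Cb hmc (hCB hbC)
    have hCbsub : Cb ⊆ B := fun x hx => hU x ((Finset.le_sup (f := id) hCbmem) hx)
    have hCbs : Cb = {b} := by
      rw [← hCbB]
      exact (Finset.inter_eq_right.2 hCbsub).symm
    have hEq : Cb = C := hA Cb hCbmem C hC (by rw [hCbs]; exact Finset.singleton_subset_iff.2 hbC)
    have : C.card = 1 := by rw [← hEq, hCbs]; exact Finset.card_singleton b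
    omega
  case pos =>
  obtain ⟨u₀, hu₀sup, hu₀B⟩ := hU
  obtain ⟨t₀, ht₀C, ht₀ne, hu₀t₀, ht₀mem⟩ := K1 u₀ hu₀B hu₀sup
  set 𝒮 : Finset (Finset V) := C.powerset.filter
      (fun t => t ≠ C ∧ ∃ u, u ∉ B ∧ u ∉ t ∧ insert u t ∈ 𝒞) with h𝒮
  have h𝒮ne : 𝒮.Nonempty := by
    refine ⟨t₀, ?_⟩
    rw [h𝒮, Finset.mem_filter, Finset.mem_powerset]
    exact ⟨ht₀C, ht₀ne, u₀, hu₀B, hu₀t₀, ht₀mem⟩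
  obtain ⟨tstar, htstar𝒮, htstarmin⟩ := Finset.exists_min_image 𝒮 Finset.card h𝒮ne
  rw [h𝒮, Finset.mem_filter, Finset.mem_powerset] at htstar𝒮
  obtain ⟨htstarC, htstarne, ustar, hustarB, hustart, hYstar⟩ := htstar𝒮
  -- minimality of tstar among all killers
  have tstar_sub : ∀ (t : Finset V) (u : V), t ⊆ C → t ≠ C → u ∉ B → u ∉ t →
      insert u t ∈ 𝒞 → tstar ⊆ t := by
    intro t u htC htne huB hut hY
    rcases comp ustar u tstar t hustarB huB htstarC htC hustart hut hYstar hY with h | h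
    · exact h
    · have ht𝒮 : t ∈ 𝒮 := by
        rw [h𝒮, Finset.mem_filter, Finset.mem_powerset]
        exact ⟨htC, htne, u, huB, hut, hY⟩
      have := htstarmin t ht𝒮
      have heq := Finset.eq_of_subset_of_card_le h this
      rw [← heq]
  have htstar_ne : tstar.Nonempty := by
    have := hmc.1 _ hYstar
    rwa [hBinsert ustar tstar hustarB (htstarC.trans hCB)] at this
  -- the descent machine
  have machine : ∀ k : ℕ, ∀ Y ∈ 𝒞, (Y \ B).card ≤ k → B ∩ Y ⊆ C →
      (∀ x ∈ tstar, x ∉ Y) → False := by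
    intro k
    induction k using Nat.strong_induction_on with
    | _ k ihk =>
    intro Y hY hk h1 h2
    by_cases hYBe : Y \ B = ∅
    · -- Y ⊆ B, hence Y ⊆ C, hence Y = C, contradicting tstar ⊆ C disjoint from Y
      have hYB : Y ⊆ B := by
        intro x hx
        by_contra hxB
        exact (Finset.eq_empty_iff_forall_notMem.1 hYBe x) (Finset.mem_sdiff.2 ⟨hx, hxB⟩)
      have hYC : Y ⊆ C := fun x hx => h1 (Finset.mem_inter.2 ⟨hYB hx, hx⟩)
      have hYeq : Y = C := hA Y hY C hC hYC
      obtain ⟨y, hy⟩ := htstar_ne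
      exact h2 y hy (by rw [hYeq]; exact htstarC hy)
    · obtain ⟨u, hu⟩ := Finset.nonempty_iff_ne_empty.2 hYBe
      rw [Finset.mem_sdiff] at hu
      obtain ⟨huY, huB⟩ := hu
      have husup : u ∈ 𝒞.sup id := (Finset.le_sup (f := id) hY) huY
      obtain ⟨tu, htuC, htune, hutu, hDu⟩ := K1 u huB husup
      have htstartu : tstar ⊆ tu := tstar_sub tu u htuC htune huB hutu hDu
      obtain ⟨Z, hZ, hZsub⟩ := hbin C hC Y hY (insert u tu) hDu
      have huC : u ∉ C := fun h => huB (hCB h)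
      have inv1 : B ∩ Z ⊆ C := by
        intro x hx
        rw [Finset.mem_inter] at hx
        obtain ⟨hxB, hxZ⟩ := hx
        by_contra hxC
        have hx3 := mem_symm3.1 (hZsub hxZ)
        simp only [Finset.mem_insert] at hx3
        have hxtu : x ∉ tu := fun h => hxC (htuC h)
        have hxu : x ≠ u := fun h => huB (h ▸ hxB)
        have hxY : x ∈ Y → x ∈ C := fun h => h1 (Finset.mem_inter.2 ⟨hxB, h⟩)
        tauto
      have inv2 : ∀ x ∈ tstar, x ∉ Z := by
        intro x hxt hxZ
        have hx3 := mem_symm3.1 (hZsub hxZ)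
        simp only [Finset.mem_insert] at hx3
        have hxC : x ∈ C := htstarC hxt
        have hxY : x ∉ Y := h2 x hxt
        have hxtu : x ∈ tu := htstartu hxt
        have hxu : x ≠ u := fun h => huC (h ▸ hxC)
        tauto
      have inv3 : Z \ B ⊆ (Y \ B).erase u := by
        intro x hx
        rw [Finset.mem_sdiff] at hx
        obtain ⟨hxZ, hxB⟩ := hx
        have hx3 := mem_symm3.1 (hZsub hxZ)
        simp only [Finset.mem_insert] at hx3
        have hxC : x ∉ C := fun h => hxB (hCB h)
        have hxtu : x ∉ tu := fun h => hxC (htuC h)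
        have hxu : x ≠ u := by
          rintro rfl
          tauto
        rw [Finset.mem_erase, Finset.mem_sdiff]
        refine ⟨hxu, ?_, hxB⟩
        tauto
      have husd : u ∈ Y \ B := Finset.mem_sdiff.2 ⟨huY, huB⟩
      have h4 := Finset.card_le_card inv3
      have h5 : ((Y \ B).erase u).card = (Y \ B).card - 1 := Finset.card_erase_of_mem husd
      have h6 : 1 ≤ (Y \ B).card := Finset.card_pos.2 ⟨u, husd⟩
      exact ihk (k - 1) (by omega) Z hZ (by omega) inv1 inv2
  -- start the machine
  obtain ⟨b, hbC, hbt⟩ := Finset.exists_of_ssubset (ssubset_of_subset_of_ne htstarC htstarne)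
  obtain ⟨Cb, hCbmem, hCbB⟩ := exists_Cb hmc (hCB hbC)
  obtain ⟨X, hX, hXsub⟩ := hbin C hC (insert ustar tstar) hYstar Cb hCbmem
  have hXinv1 : B ∩ X ⊆ C := by
    intro x hx
    rw [Finset.mem_inter] at hx
    obtain ⟨hxB, hxX⟩ := hx
    by_contra hxC
    have hx3 := mem_symm3.1 (hXsub hxX)
    simp only [Finset.mem_insert] at hx3
    have hxt : x ∉ tstar := fun h => hxC (htstarC h)
    have hxu : x ≠ ustar := fun h => hustarB (h ▸ hxB)
    have hxCb : x ∉ Cb := by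
      intro h
      have hxs : x ∈ B ∩ Cb := Finset.mem_inter.2 ⟨hxB, h⟩
      rw [hCbB] at hxs
      exact hxC ((Finset.mem_singleton.1 hxs) ▸ hbC)
    tauto
  have hXinv2 : ∀ x ∈ tstar, x ∉ X := by
    intro x hxt hxX
    have hx3 := mem_symm3.1 (hXsub hxX)
    simp only [Finset.mem_insert] at hx3
    have hxC : x ∈ C := htstarC hxt
    have hxB : x ∈ B := hCB hxC
    have hxu : x ≠ ustar := fun h => hustarB (h ▸ hxB)
    have hxCb : x ∉ Cb := by
      intro h
      have hxs : x ∈ B ∩ Cb := Finset.mem_inter.2 ⟨hxB, h⟩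
      rw [hCbB] at hxs
      exact hbt ((Finset.mem_singleton.1 hxs) ▸ hxt)
    tauto
  exact machine ((X \ B).card) X hX le_rfl hXinv1 hXinv2

end BinClutter

/-- A clutter `𝒞` (a finite antichain of subsets of a finite ground set `V`)
is binary — the symmetric difference of any three members contains a member — if and only if
`|C ∩ B|` is odd for every member `C ∈ 𝒞` and every minimal cover `B ∈ b(𝒞)`. -/
theorem binary_clutter_iff_odd_intersection_with_blocker
    {V : Type} [Fintype V] [DecidableEq V]
    (𝒞 : Finset (Finset V))
    (hclutter : ∀ C ∈ 𝒞, ∀ C' ∈ 𝒞, C ⊆ C' → C = C') :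
    (∀ C₁ ∈ 𝒞, ∀ C₂ ∈ 𝒞, ∀ C₃ ∈ 𝒞, ∃ C ∈ 𝒞, C ⊆ symmDiff (symmDiff C₁ C₂) C₃) ↔
    (∀ C ∈ 𝒞, ∀ B : Finset V,
      ((∀ C' ∈ 𝒞, (B ∩ C').Nonempty) ∧
        ∀ B' ⊂ B, ¬ (∀ C' ∈ 𝒞, (B' ∩ C').Nonempty)) →
      Odd (B ∩ C).card) := by
  constructor
  · -- binary ⇒ odd intersections
    intro hbin C hC B hBcond
    exact BinClutter.main_odd ((𝒞.sup id \ B).card) 𝒞 B hclutter hbin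
      ⟨hBcond.1, hBcond.2⟩ le_rfl C hC
  · -- odd intersections ⇒ binary
    intro hpar C₁ hC₁ C₂ hC₂ C₃ hC₃
    by_contra hno
    push_neg at hno
    set D := symmDiff (symmDiff C₁ C₂) C₃ with hD
    have hcov : BinClutter.Cov 𝒞 (Finset.univ \ D) := by
      intro C' hC'
      obtain ⟨x, hxC', hxD⟩ := Finset.not_subset.1 (by
        intro hsub
        exact (hno C' hC' hsub).elim : ¬ C' ⊆ D)
      exact ⟨x, Finset.mem_inter.2 ⟨Finset.mem_sdiff.2 ⟨Finset.mem_univ x, hxD⟩, hxC'⟩⟩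
    obtain ⟨B, hBsub, hmc⟩ := BinClutter.exists_minCov 𝒞 _ hcov
    have o1 := hpar C₁ hC₁ B ⟨hmc.1, hmc.2⟩
    have o2 := hpar C₂ hC₂ B ⟨hmc.1, hmc.2⟩
    have o3 := hpar C₃ hC₃ B ⟨hmc.1, hmc.2⟩
    have hBD : B ∩ D = ∅ := by
      rw [Finset.eq_empty_iff_forall_notMem]
      intro x hx
      rw [Finset.mem_inter] at hx
      exact (Finset.mem_sdiff.1 (hBsub hx.1)).2 hx.2
    have e1 : B ∩ D = symmDiff (symmDiff (B ∩ C₁) (B ∩ C₂)) (B ∩ C₃) := by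
      rw [hD, BinClutter.inter_symmDiff_distrib, BinClutter.inter_symmDiff_distrib]
    have hzero : (symmDiff (symmDiff (B ∩ C₁) (B ∩ C₂)) (B ∩ C₃)).card = 0 := by
      rw [← e1, hBD, Finset.card_empty]
    have p1 := BinClutter.card_symmDiff_mod (symmDiff (B ∩ C₁) (B ∩ C₂)) (B ∩ C₃)
    have p2 := BinClutter.card_symmDiff_mod (B ∩ C₁) (B ∩ C₂)
    rw [Nat.odd_iff] at o1 o2 o3
    omega
end

section
/- For S ⊆ {0,1}^r and C = cuboid(S), let y ∈ R_{≥0}^C and define α ∈ R_{≥0}^S by α_p = (1/2) y_{C_p} where C_p is the member corresponding to p. Then y is a fractional packing of C of value two (i.e., Σ_C y_C = 2 and for every element v of the ground set, Σ(y_C : v ∈ C) ≤ 1) if and only if Σ_{p∈S} α_p = 1 and Σ_{p∈S} α_p · p = (1/2)·1. In particular, cuboid(S) has a fractional packing of value two if and only if (1/2)·1 ∈ conv(S). -/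
/-- The member of `cuboid(S)` corresponding to a point `p ∈ {0,1}^r`. The ground set is
`Fin r × ZMod 2`, where `(i, 1)` stands for coordinate `2i-1` and `(i, 0)` for `2i`; the
member of `p` has incidence vector `(p₁, 1-p₁, …, p_r, 1-p_r)`, i.e. it consists of the
elements `(i, p i)`. -/
def cuboidMemb {r : ℕ} (p : Fin r → ZMod 2) : Finset (Fin r × ZMod 2) :=
  Finset.univ.filter (fun e => p e.1 = e.2)

/-- For `S ⊆ {0,1}^r` and `𝒞 = cuboid(S)` with `y ∈ ℝ₊^𝒞` (indexed by the
points `p ∈ S`, via the bijection `p ↦ C_p`), setting `α_p = y_p / 2`: `y` is a fractional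
packing of value two (total value `2`, and total weight at most `1` on each element of the
ground set) iff `Σ α_p = 1` and `Σ α_p · p = (1/2)·𝟏`. In particular, `cuboid(S)` has a
fractional packing of value two iff `(1/2)·𝟏 ∈ conv(S)`. -/
theorem cuboid_fractional_packing_iff_convex_combination (r : ℕ)
    (S : Finset (Fin r → ZMod 2)) :
    (∀ y : (Fin r → ZMod 2) → ℝ, (∀ p, 0 ≤ y p) →
      (((∑ p ∈ S, y p) = 2 ∧
          ∀ v : Fin r × ZMod 2, (∑ p ∈ S.filter (fun p => p v.1 = v.2), y p) ≤ 1) ↔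
        ((∑ p ∈ S, y p / 2) = 1 ∧
          ∀ i : Fin r, (∑ p ∈ S, (y p / 2) * ((p i).val : ℝ)) = 1 / 2))) ∧
    ((∃ y : (Fin r → ZMod 2) → ℝ, (∀ p, 0 ≤ y p) ∧ (∑ p ∈ S, y p) = 2 ∧
        ∀ v : Fin r × ZMod 2, (∑ p ∈ S.filter (fun p => p v.1 = v.2), y p) ≤ 1) ↔
      (fun _ : Fin r => (1 / 2 : ℝ)) ∈
        convexHull ℝ ((fun (p : Fin r → ZMod 2) (i : Fin r) => ((p i).val : ℝ)) '' ↑S)) := by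
  classical
  set f : (Fin r → ZMod 2) → (Fin r → ℝ) := fun p i => ((p i).val : ℝ) with hf
  have hz : ∀ a : ZMod 2, a = 0 ∨ a = 1 := by decide
  have hv1 : ((1 : ZMod 2)).val = 1 := rfl
  have hsum1 : ∀ (y : (Fin r → ZMod 2) → ℝ) (i : Fin r),
      ∑ p ∈ S.filter (fun p => p i = 1), y p = ∑ p ∈ S, y p * ((p i).val : ℝ) := by
    intro y i
    rw [Finset.sum_filter]
    refine Finset.sum_congr rfl fun p _ => ?_
    rcases hz (p i) with h | h <;> simp [h, hv1]
  have hsum0 : ∀ (y : (Fin r → ZMod 2) → ℝ) (i : Fin r),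
      ∑ p ∈ S.filter (fun p => p i = 0), y p
        = ∑ p ∈ S, y p - ∑ p ∈ S, y p * ((p i).val : ℝ) := by
    intro y i
    rw [Finset.sum_filter, ← Finset.sum_sub_distrib]
    refine Finset.sum_congr rfl fun p _ => ?_
    rcases hz (p i) with h | h <;> simp [h, hv1]
  have hhalf : ∀ (y : (Fin r → ZMod 2) → ℝ) (i : Fin r),
      (∑ p ∈ S, y p / 2 * ((p i).val : ℝ)) = (∑ p ∈ S, y p * ((p i).val : ℝ)) / 2 := by
    intro y i
    rw [Finset.sum_div]
    exact Finset.sum_congr rfl fun p _ => by ring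
  have key : ∀ y : (Fin r → ZMod 2) → ℝ, (∀ p, 0 ≤ y p) →
      (((∑ p ∈ S, y p) = 2 ∧
          ∀ v : Fin r × ZMod 2, (∑ p ∈ S.filter (fun p => p v.1 = v.2), y p) ≤ 1) ↔
        ((∑ p ∈ S, y p / 2) = 1 ∧
          ∀ i : Fin r, (∑ p ∈ S, (y p / 2) * ((p i).val : ℝ)) = 1 / 2)) := by
    intro y _
    constructor
    · rintro ⟨ht, hv⟩
      refine ⟨by rw [← Finset.sum_div, ht]; norm_num, fun i => ?_⟩
      have h1 := hv (i, 1)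
      have h0 := hv (i, 0)
      rw [hsum1 y i] at h1
      rw [hsum0 y i, ht] at h0
      rw [hhalf y i]
      linarith
    · rintro ⟨h1, h2⟩
      rw [← Finset.sum_div] at h1
      have ht : ∑ p ∈ S, y p = 2 := by linarith
      refine ⟨ht, fun v => ?_⟩
      obtain ⟨i, b⟩ := v
      have h2i := h2 i
      rw [hhalf y i] at h2i
      rcases hz b with h | h <;> subst h
      · rw [hsum0 y i, ht]; linarith
      · rw [hsum1 y i]; linarith
  refine ⟨key, ?_⟩
  constructor
  · rintro ⟨y, hy, ht, hv⟩
    obtain ⟨h1, h2⟩ := (key y hy).mp ⟨ht, hv⟩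
    have hmem := S.centerMass_mem_convexHull (w := fun p => y p / 2)
      (fun p _ => by have := hy p; positivity) (by rw [h1]; norm_num)
      (fun p hp => Set.mem_image_of_mem f (Finset.mem_coe.mpr hp))
    rw [Finset.centerMass_eq_of_sum_1 _ _ h1] at hmem
    convert hmem using 1
    funext i
    rw [Finset.sum_apply]
    exact (h2 i).symm
  · intro hmem
    have hinj : Set.InjOn f ↑S := by
      intro p _ q _ h
      funext i
      have hi : ((p i).val : ℝ) = ((q i).val : ℝ) := congrFun h i
      rcases hz (p i) with h1 | h1 <;> rcases hz (q i) with h2 | h2 <;>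
        simp [h1, h2, hv1] at hi ⊢
    rw [← Finset.coe_image] at hmem
    obtain ⟨w, hw0, hw1, hwx⟩ := Finset.mem_convexHull'.mp hmem
    set y : (Fin r → ZMod 2) → ℝ := fun p => if p ∈ S then 2 * w (f p) else 0 with hy
    have hynn : ∀ p, 0 ≤ y p := by
      intro p
      by_cases hp : p ∈ S
      · simp only [hy, hp, if_true]
        have := hw0 (f p) (Finset.mem_image_of_mem f hp)
        linarith
      · simp [hy, hp]
    have hys : ∀ p ∈ S, y p = 2 * w (f p) := fun p hp => by simp [hy, hp]
    have hsum : ∑ p ∈ S, w (f p) = 1 := by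
      rw [← Finset.sum_image hinj]; exact hw1
    refine ⟨y, hynn, (key y hynn).mpr ⟨?_, ?_⟩⟩
    · rw [show ∑ p ∈ S, y p / 2 = ∑ p ∈ S, w (f p) from
        Finset.sum_congr rfl fun p hp => by rw [hys p hp]; ring, hsum]
    · intro i
      have h1 : ∑ p ∈ S, y p / 2 * ((p i).val : ℝ) = ∑ q ∈ S.image f, w q * q i := by
        rw [Finset.sum_image hinj]
        refine Finset.sum_congr rfl fun p hp => ?_
        rw [hys p hp]
        simp only [hf]
        ring
      rw [h1]
      have h2 := congrFun hwx i
      rw [Finset.sum_apply] at h2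
      simpa using h2
end
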